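/- Approximation lemma: if A_l ∈ W^{1,p}_loc(ℝ^d) with p as in the standing hypothesis (p = d for d ≥ 3) and u ∈ H¹(ℝ^d) ∩ L²(ℝ^d) is compactly supported, then (∂_k^δ A_l) τ_k^δ u → (∂_k A_l) u in L²(ℝ^d) as δ → 0, where ∂_k^δ is the difference quotient and τ_k^δ the translation. -/

import Mathlib

open MeasureTheory Filter Topology Set
open scoped ENNReal

private lemma jensen_pow {ν : Measure ℝ} [IsProbabilityMeasure ν] {h : ℝ → ℝ≥0∞}
    (hm : AEMeasurable h ν) {r : ℝ} (hr : 1 < r) :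
    (∫⁻ t, h t ∂ν) ^ r ≤ ∫⁻ t, h t ^ r ∂ν := by
  have hconj : r.HolderConjugate (Real.conjExponent r) := Real.HolderConjugate.conjExponent hr
  have H := ENNReal.lintegral_mul_le_Lp_mul_Lq ν hconj hm aemeasurable_const (g := fun _ => 1)
  simp only [Pi.mul_apply, mul_one, ENNReal.one_rpow, lintegral_const, measure_univ,
    ENNReal.one_rpow, one_mul] at H
  have h0r : 0 ≤ r := by linarith
  calc (∫⁻ t, h t ∂ν) ^ r ≤ ((∫⁻ t, h t ^ r ∂ν) ^ (1 / r)) ^ r := by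
        exact ENNReal.rpow_le_rpow H h0r
    _ = ∫⁻ t, h t ^ r ∂ν := by
        rw [← ENNReal.rpow_mul, one_div, inv_mul_cancel₀ (by linarith), ENNReal.rpow_one]

private lemma unifIntegrable_of_le_eLpNorm {α : Type*} {m : MeasurableSpace α}
    {μ : Measure α} [IsFiniteMeasure μ] {β : Type*} [NormedAddCommGroup β]
    {F : ℕ → α → β} {p q : ℝ≥0∞} (hp : 1 ≤ p) (hpq : p < q) (hq : q ≠ ∞)
    (hF : ∀ n, AEStronglyMeasurable (F n) μ) {C : ℝ≥0∞} (hC : C ≠ ∞)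
    (hCF : ∀ n, eLpNorm (F n) q μ ≤ C) : UnifIntegrable F p μ := by
  intro ε hε
  set α0 : ℝ := 1 / p.toReal - 1 / q.toReal with hα0
  have hp0 : p ≠ 0 := fun h => by simp [h] at hp
  have hptop : p ≠ ∞ := hpq.trans_le le_top |>.ne
  have hqt : 0 < q.toReal := ENNReal.toReal_pos ((zero_lt_one.trans_le hp).trans hpq).ne' hq
  have hpt : 0 < p.toReal := ENNReal.toReal_pos hp0 hptop
  have hα : 0 < α0 := by
    have : p.toReal < q.toReal := ENNReal.toReal_lt_toReal hptop hq |>.mpr hpq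
    rw [hα0, sub_pos]
    exact one_div_lt_one_div_of_lt hpt this
  set C' : ℝ≥0∞ := max C 1 with hC'
  have hC'0 : C' ≠ 0 := by simp [hC']
  have hC't : C' ≠ ∞ := by simp [hC', hC]
  set b : ℝ≥0∞ := min 1 (ENNReal.ofReal ε / C') with hb
  have hb0 : b ≠ 0 :=
    (lt_min zero_lt_one (ENNReal.div_pos (ENNReal.ofReal_pos.2 hε).ne' hC't)).ne'
  have hbt : b ≠ ∞ := by simp [hb]
  refine ⟨b.toReal ^ (1 / α0), Real.rpow_pos_of_pos (ENNReal.toReal_pos hb0 hbt) _, fun n s hs hμs => ?_⟩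
  have key : eLpNorm (s.indicator (F n)) p μ ≤ C * (μ s) ^ α0 := by
    rw [eLpNorm_indicator_eq_eLpNorm_restrict hs]
    calc eLpNorm (F n) p (μ.restrict s)
        ≤ eLpNorm (F n) q (μ.restrict s) * (μ.restrict s) Set.univ ^ α0 :=
          eLpNorm_le_eLpNorm_mul_rpow_measure_univ hpq.le
            ((hF n).mono_measure Measure.restrict_le_self)
      _ ≤ C * (μ s) ^ α0 :=
          mul_le_mul' ((eLpNorm_mono_measure _ Measure.restrict_le_self).trans (hCF n))
            (le_of_eq (by rw [Measure.restrict_apply_univ]))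
  refine key.trans ?_
  have hμsb : (μ s) ^ α0 ≤ b := by
    calc (μ s) ^ α0 ≤ (ENNReal.ofReal (b.toReal ^ (1/α0))) ^ α0 :=
          ENNReal.rpow_le_rpow hμs hα.le
      _ = b := by
          rw [ENNReal.ofReal_rpow_of_nonneg (by positivity) hα.le,
            ← Real.rpow_mul ENNReal.toReal_nonneg, one_div, inv_mul_cancel₀ hα.ne',
            Real.rpow_one, ENNReal.ofReal_toReal hbt]
  calc C * (μ s) ^ α0 ≤ C' * (ENNReal.ofReal ε / C') := by
        gcongr
        · exact le_max_left _ _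
        · exact hμsb.trans (min_le_right _ _)
    _ ≤ ENNReal.ofReal ε := ENNReal.mul_div_le

private lemma core_bound {d : ℕ} (hd : 3 ≤ d)
    (a : EuclideanSpace ℝ (Fin d) → ℝ) (ha : Differentiable ℝ a)
    (e : EuclideanSpace ℝ (Fin d)) (he : ‖e‖ = 1)
    {K1 K2 : Set (EuclideanSpace ℝ (Fin d))}
    (hK1m : MeasurableSet K1)
    (hsub : ∀ c : EuclideanSpace ℝ (Fin d), ‖c‖ ≤ 1 → (fun x => x + c) '' K1 ⊆ K2)
    (hK2vol : volume K2 ≠ ⊤)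
    (hG : MemLp (fun y => ‖fderiv ℝ a y‖) (d : ℝ≥0∞) (volume.restrict K2))
    {δ : ℝ} (hδ0 : δ ≠ 0) (hδ1 : |δ| ≤ 1) :
    eLpNorm (fun x => (a (x + δ • e) - a x) / δ) (d : ℝ≥0∞) (volume.restrict K1)
      ≤ eLpNorm (fun y => ‖fderiv ℝ a y‖) (d : ℝ≥0∞) (volume.restrict K2) := by
  have hdr : (1:ℝ) < (d:ℝ) := by exact_mod_cast lt_of_lt_of_le (by norm_num : (1:ℕ) < 3) hd
  have hdE0 : (d : ℝ≥0∞) ≠ 0 := by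
    simp only [ne_eq, Nat.cast_eq_zero]; omega
  have hdEt : (d : ℝ≥0∞) ≠ ⊤ := ENNReal.natCast_ne_top d
  have hdtr : ((d : ℝ≥0∞)).toReal = (d : ℝ) := by simp
  set Gq : EuclideanSpace ℝ (Fin d) → ℝ≥0∞ := fun y => (‖fderiv ℝ a y‖₊ : ℝ≥0∞) with hGq
  have hGqm : Measurable Gq := (measurable_fderiv ℝ a).enorm
  set g : EuclideanSpace ℝ (Fin d) → ℝ := fun y => fderiv ℝ a y e with hg
  have hgm : Measurable g := measurable_fderiv_apply_const ℝ a e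
  have he' : ‖e‖₊ = 1 := by
    ext; rw [coe_nnnorm, he]; rfl
  have hge' : ∀ y, (‖g y‖₊ : ℝ≥0∞) ≤ Gq y := fun y => by
    refine ENNReal.coe_le_coe.2 ?_
    simpa [he'] using (fderiv ℝ a y).le_opNNNorm e
  set I : Set ℝ := Set.uIoc (0:ℝ) δ with hI
  have hIm : MeasurableSet I := measurableSet_uIoc
  have hIvol : volume I = ENNReal.ofReal |δ| := by
    rw [hI, Set.uIoc, Real.volume_Ioc, max_sub_min_eq_abs, sub_zero]
  have habsδ : (0:ℝ) < |δ| := abs_pos.2 hδ0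
  have hofδ0 : ENNReal.ofReal |δ| ≠ 0 := (ENNReal.ofReal_pos.2 habsδ).ne'
  have hofδt : ENNReal.ofReal |δ| ≠ ⊤ := ENNReal.ofReal_ne_top
  have htI : ∀ t ∈ I, ‖t • e‖ ≤ 1 := by
    intro t ht
    rw [norm_smul, he, mul_one]
    rw [hI, Set.mem_uIoc] at ht
    rw [Real.norm_eq_abs, abs_le]
    rcases ht with ⟨h1, h2⟩ | ⟨h1, h2⟩
    · exact ⟨by linarith [neg_abs_le δ, le_abs_self δ], by linarith [le_abs_self δ]⟩
    · exact ⟨by linarith [neg_abs_le δ], by linarith [le_abs_self δ, neg_abs_le δ]⟩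
  set ν : Measure ℝ := (ENNReal.ofReal |δ|)⁻¹ • (volume.restrict I) with hν
  haveI hνprob : IsProbabilityMeasure ν := by
    constructor
    rw [hν, Measure.smul_apply, smul_eq_mul, Measure.restrict_apply_univ, hIvol]
    exact ENNReal.inv_mul_cancel hofδ0 hofδt
  set μ1 := volume.restrict K1 with hμ1
  -- translation bound
  have htrans : ∀ c : EuclideanSpace ℝ (Fin d), ‖c‖ ≤ 1 → ∀ f : EuclideanSpace ℝ (Fin d) → ℝ≥0∞,
      (∫⁻ x in K1, f (x + c) ∂volume) ≤ ∫⁻ y in K2, f y ∂volume := by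
    intro c hc f
    rw [(measurePreserving_add_right volume c).setLIntegral_comp_emb
      (MeasurableEquiv.addRight c).measurableEmbedding f K1]
    exact lintegral_mono_set (hsub c hc)
  -- finiteness of the gradient integrals over K2
  have hK2d : ∫⁻ y in K2, Gq y ^ (d:ℝ) ∂volume ≠ ⊤ := by
    have h2 := hG.2
    rw [eLpNorm_eq_lintegral_rpow_enorm_toReal hdE0 hdEt, hdtr] at h2
    simp only [enorm_norm] at h2
    intro hcon
    rw [show (∫⁻ x in K2, ‖fderiv ℝ a x‖ₑ ^ (d:ℝ) ∂volume) = ⊤ from hcon] at h2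
    rw [ENNReal.top_rpow_of_pos (by positivity)] at h2
    exact (lt_irrefl _ h2).elim
  have hK21 : ∫⁻ y in K2, Gq y ∂volume ≠ ⊤ := by
    haveI : Fact (volume K2 < ⊤) := ⟨lt_top_iff_ne_top.2 hK2vol⟩
    have h1 : MemLp (fun y => ‖fderiv ℝ a y‖) 1 (volume.restrict K2) :=
      hG.mono_exponent (by exact_mod_cast Nat.one_le_iff_ne_zero.2 (by omega))
    have h2 := (memLp_one_iff_integrable.1 h1).2
    rw [HasFiniteIntegral] at h2
    exact (by simpa only [enorm_norm] using h2.ne : ∫⁻ y in K2, ‖fderiv ℝ a y‖ₑ ∂volume ≠ ⊤)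
  -- measurability of (x, t) ↦ Gq (x + t • e)
  have hcont : Continuous fun p : EuclideanSpace ℝ (Fin d) × ℝ => p.1 + p.2 • e :=
    continuous_fst.add (continuous_snd.smul continuous_const)
  have hGqc : Measurable fun p : EuclideanSpace ℝ (Fin d) × ℝ => Gq (p.1 + p.2 • e) :=
    hGqm.comp hcont.measurable
  -- a.e. finiteness of the line integrals
  have haefin : ∀ᵐ x ∂μ1, (∫⁻ t in I, Gq (x + t • e) ∂volume) < ⊤ := by
    refine ae_lt_top (Measurable.lintegral_prod_right hGqc) ?_
    have hsw : ∫⁻ x, (∫⁻ t in I, Gq (x + t • e) ∂volume) ∂μ1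
        = ∫⁻ t in I, (∫⁻ x, Gq (x + t • e) ∂μ1) ∂volume := by
      exact lintegral_lintegral_swap (hGqc.aemeasurable)
    rw [hsw]
    have hb : ∫⁻ t in I, (∫⁻ x, Gq (x + t • e) ∂μ1) ∂volume
        ≤ ∫⁻ _ in I, (∫⁻ y in K2, Gq y ∂volume) ∂volume := by
      refine setLIntegral_mono' hIm fun t ht => htrans (t • e) (htI t ht) Gq
    refine (lt_of_le_of_lt hb ?_).ne
    rw [setLIntegral_const, hIvol]
    exact ENNReal.mul_lt_top (lt_top_iff_ne_top.2 hK21) (lt_top_iff_ne_top.2 hofδt)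
  -- pointwise bound
  have hpt : ∀ᵐ x ∂μ1, (‖(a (x + δ • e) - a x) / δ‖₊ : ℝ≥0∞) ^ (d:ℝ)
      ≤ ∫⁻ t, Gq (x + t • e) ^ (d:ℝ) ∂ν := by
    filter_upwards [haefin] with x hx
    have hmeas_line : Measurable fun t : ℝ => g (x + t • e) :=
      hgm.comp (measurable_const.add (measurable_id.smul_const e))
    have hii : IntervalIntegrable (fun t => g (x + t • e)) volume 0 δ := by
      rw [intervalIntegrable_iff]
      refine ⟨hmeas_line.aestronglyMeasurable.restrict, ?_⟩
      rw [HasFiniteIntegral]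
      refine lt_of_le_of_lt (lintegral_mono fun t => hge' (x + t • e)) hx
    have hderiv : ∀ t : ℝ, HasDerivAt (fun s : ℝ => a (x + s • e)) (g (x + t • e)) t := by
      intro t
      have h1 : HasDerivAt (fun s : ℝ => x + s • e) e t := by
        simpa using ((hasDerivAt_id t).smul_const e).const_add x
      exact ((ha (x + t • e)).hasFDerivAt.comp_hasDerivAt t h1)
    have hFTC : ∫ t in (0:ℝ)..δ, g (x + t • e) = a (x + δ • e) - a x := by
      have := intervalIntegral.integral_eq_sub_of_hasDerivAt (fun t _ => hderiv t) hii
      simpa using this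
    have habs : (a (x + δ • e) - a x) / δ = |δ|⁻¹ • ∫ t in I, g (x + t • e) ∂volume := by
      rw [← hFTC, intervalIntegral.intervalIntegral_eq_integral_uIoc]
      simp only [smul_eq_mul, div_eq_inv_mul]
      rcases lt_or_gt_of_ne hδ0 with h | h
      · rw [if_neg (not_le.2 h), abs_of_neg h, inv_neg]
        ring
      · rw [if_pos h.le, abs_of_pos h]
        ring
    have key : (‖(a (x + δ • e) - a x) / δ‖₊ : ℝ≥0∞) ≤ ∫⁻ t, Gq (x + t • e) ∂ν := by
      calc (‖(a (x + δ • e) - a x) / δ‖₊ : ℝ≥0∞)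
          = ENNReal.ofReal |δ|⁻¹ * (‖∫ t in I, g (x + t • e) ∂volume‖₊ : ℝ≥0∞) := by
            rw [habs, nnnorm_smul, ENNReal.coe_mul]
            congr 1
            exact Real.enorm_eq_ofReal (by positivity)
        _ ≤ ENNReal.ofReal |δ|⁻¹ * ∫⁻ t in I, (‖g (x + t • e)‖₊ : ℝ≥0∞) ∂volume := by
            gcongr
            exact enorm_integral_le_lintegral_enorm _
        _ ≤ ENNReal.ofReal |δ|⁻¹ * ∫⁻ t in I, Gq (x + t • e) ∂volume := by
            gcongr with t
            exact hge' _
        _ = ∫⁻ t, Gq (x + t • e) ∂ν := by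
            rw [hν, lintegral_smul_measure, smul_eq_mul, ENNReal.ofReal_inv_of_pos habsδ]
    calc (‖(a (x + δ • e) - a x) / δ‖₊ : ℝ≥0∞) ^ (d:ℝ)
        ≤ (∫⁻ t, Gq (x + t • e) ∂ν) ^ (d:ℝ) := ENNReal.rpow_le_rpow key (by positivity)
      _ ≤ ∫⁻ t, Gq (x + t • e) ^ (d:ℝ) ∂ν := by
          refine jensen_pow ?_ hdr
          exact (hGqm.comp (measurable_const.add (measurable_id.smul_const e))).aemeasurable
  -- integrate, swap, translate
  have hmain : ∫⁻ x, (‖(a (x + δ • e) - a x) / δ‖₊ : ℝ≥0∞) ^ (d:ℝ) ∂μ1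
      ≤ ∫⁻ y in K2, Gq y ^ (d:ℝ) ∂volume := by
    calc ∫⁻ x, (‖(a (x + δ • e) - a x) / δ‖₊ : ℝ≥0∞) ^ (d:ℝ) ∂μ1
        ≤ ∫⁻ x, (∫⁻ t, Gq (x + t • e) ^ (d:ℝ) ∂ν) ∂μ1 := lintegral_mono_ae hpt
      _ = ∫⁻ t, (∫⁻ x, Gq (x + t • e) ^ (d:ℝ) ∂μ1) ∂ν := by
          refine lintegral_lintegral_swap ?_
          exact ((hGqc.pow_const _).aemeasurable)
      _ ≤ ∫⁻ _, (∫⁻ y in K2, Gq y ^ (d:ℝ) ∂volume) ∂ν := by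
          refine lintegral_mono_ae ?_
          have hIae : ∀ᵐ t ∂ν, t ∈ I := by
            rw [hν]
            exact Measure.ae_smul_measure (ae_restrict_mem hIm) _
          filter_upwards [hIae] with t ht
          exact htrans (t • e) (htI t ht) (fun y => Gq y ^ (d:ℝ))
      _ = ∫⁻ y in K2, Gq y ^ (d:ℝ) ∂volume := by
          rw [lintegral_const, measure_univ, mul_one]
  rw [eLpNorm_eq_lintegral_rpow_enorm_toReal hdE0 hdEt, eLpNorm_eq_lintegral_rpow_enorm_toReal hdE0 hdEt,
    hdtr]
  simp only [enorm_norm]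
  exact ENNReal.rpow_le_rpow hmain (by positivity)

/-- Approximation lemma: if `a = A_l ∈ W^{1,d}_loc(ℝ^d)` (`d ≥ 3`) and `u ∈ H¹(ℝ^d)` is
compactly supported, then `(∂_k^δ a) τ_k^δ u → (∂_k a) u` in `L²(ℝ^d)` as `δ → 0`. -/
theorem diff_quotient_approximation (d : ℕ) (hd : 3 ≤ d) (k : Fin d)
    (a : EuclideanSpace ℝ (Fin d) → ℝ)
    (ha : Differentiable ℝ a)
    (haW : ∀ K : Set (EuclideanSpace ℝ (Fin d)), IsCompact K →
      MemLp (fun x => ‖fderiv ℝ a x‖) (d : ℝ≥0∞) (volume.restrict K))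
    (u : EuclideanSpace ℝ (Fin d) → ℂ)
    (hu : Differentiable ℝ u) (husupp : HasCompactSupport u)
    (huL2 : MemLp u 2 (volume : Measure (EuclideanSpace ℝ (Fin d))))
    (hugrad : MemLp (fun x => ‖fderiv ℝ u x‖) 2
      (volume : Measure (EuclideanSpace ℝ (Fin d)))) :
    Tendsto (fun δ : ℝ =>
        eLpNorm (fun x : EuclideanSpace ℝ (Fin d) =>
            (((a (x + δ • EuclideanSpace.single k (1 : ℝ)) - a x) / δ : ℝ) : ℂ) *
              u (x + δ • EuclideanSpace.single k (1 : ℝ))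
            - ((fderiv ℝ a x (EuclideanSpace.single k (1 : ℝ)) : ℝ) : ℂ) * u x)
          2 volume)
      (𝓝[≠] (0 : ℝ)) (𝓝 0) := by
  classical
  set e : EuclideanSpace ℝ (Fin d) := EuclideanSpace.single k (1:ℝ) with he_def
  have he : ‖e‖ = 1 := by rw [he_def, EuclideanSpace.norm_single]; norm_num
  set g : EuclideanSpace ℝ (Fin d) → ℝ := fun x => fderiv ℝ a x e with hg_def
  have hgm : Measurable g := measurable_fderiv_apply_const ℝ a e
  set F : ℝ → EuclideanSpace ℝ (Fin d) → ℂ :=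
    fun δ x => (((a (x + δ • e) - a x) / δ : ℝ) : ℂ) * u (x + δ • e) with hF_def
  set f0 : EuclideanSpace ℝ (Fin d) → ℂ := fun x => ((g x : ℝ) : ℂ) * u x with hf0_def
  obtain ⟨M, hM⟩ := husupp.exists_bound_of_continuous hu.continuous
  have hM0 : 0 ≤ M := le_trans (norm_nonneg _) (hM 0)
  set K : Set (EuclideanSpace ℝ (Fin d)) := tsupport u with hK_def
  have hKc : IsCompact K := husupp
  set K1 := Metric.cthickening 1 K with hK1_def
  set K2 := Metric.cthickening 2 K with hK2_def
  have hK1c : IsCompact K1 := hKc.cthickening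
  have hK2c : IsCompact K2 := hKc.cthickening
  have hK1m : MeasurableSet K1 := Metric.isClosed_cthickening.measurableSet
  haveI : Fact (volume K1 < ⊤) := ⟨hK1c.measure_lt_top⟩
  set μ1 : Measure (EuclideanSpace ℝ (Fin d)) := volume.restrict K1 with hμ1_def
  have hsub12 : ∀ c : EuclideanSpace ℝ (Fin d), ‖c‖ ≤ 1 → (fun x => x + c) '' K1 ⊆ K2 := by
    rintro c hc y ⟨x, hx, rfl⟩
    rw [hK1_def, Metric.mem_cthickening_iff] at hx
    rw [hK2_def, Metric.mem_cthickening_iff]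
    calc EMetric.infEdist (x + c) K ≤ EMetric.infEdist x K + edist (x + c) x :=
          EMetric.infEdist_le_infEdist_add_edist
      _ ≤ ENNReal.ofReal 1 + ENNReal.ofReal 1 := by
          refine add_le_add hx ?_
          rw [edist_dist, dist_eq_norm, add_sub_cancel_left]
          exact ENNReal.ofReal_le_ofReal hc
      _ = ENNReal.ofReal 2 := by rw [← ENNReal.ofReal_add] <;> norm_num
  -- vanishing outside K1
  have hvanish : ∀ δ : ℝ, |δ| ≤ 1 → ∀ x, x ∉ K1 → F δ x - f0 x = 0 := by
    intro δ hδ x hx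
    have hxK : x ∉ K := fun h => hx (Metric.self_subset_cthickening _ h)
    have hux : u x = 0 := image_eq_zero_of_notMem_tsupport hxK
    have hux' : u (x + δ • e) = 0 := by
      by_contra h
      apply hx
      have hmem : x + δ • e ∈ K := subset_tsupport u h
      refine Metric.mem_cthickening_of_dist_le x (x + δ • e) 1 K hmem ?_
      have hdist : dist x (x + δ • e) = ‖δ • e‖ := by
        rw [dist_eq_norm]
        simp
      rw [hdist, norm_smul, he, mul_one, Real.norm_eq_abs]
      exact hδ
    simp [hF_def, hf0_def, hux, hux']
  -- eLpNorm over volume equals over μ1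
  have hnorm_eq : ∀ δ : ℝ, |δ| ≤ 1 →
      eLpNorm (fun x => F δ x - f0 x) 2 volume = eLpNorm (fun x => F δ x - f0 x) 2 μ1 := by
    intro δ hδ
    rw [hμ1_def, ← eLpNorm_indicator_eq_eLpNorm_restrict hK1m]
    congr 1
    exact (Set.indicator_eq_self.2 (Function.support_subset_iff'.2 (hvanish δ hδ))).symm
  -- measurability facts
  have hFc : ∀ δ : ℝ, Continuous (F δ) := by
    intro δ
    have h1 : Continuous fun x : EuclideanSpace ℝ (Fin d) => x + δ • e :=
      continuous_id.add continuous_const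
    exact (Complex.continuous_ofReal.comp
      (((ha.continuous.comp h1).sub ha.continuous).div_const δ)).mul (hu.continuous.comp h1)
  have hf0m : AEStronglyMeasurable f0 μ1 :=
    ((Complex.measurable_ofReal.comp hgm).mul hu.continuous.measurable).aestronglyMeasurable
  -- f0 ∈ L²(μ1)
  have hd2 : (2 : ℝ≥0∞) ≤ (d : ℝ≥0∞) := by exact_mod_cast (by omega : (2:ℕ) ≤ d)
  have hf0L2 : MemLp f0 2 μ1 := by
    have hGm2 : MemLp (fun y => ‖fderiv ℝ a y‖) 2 μ1 :=
      (haW K1 hK1c).mono_exponent hd2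
    refine MemLp.of_le_mul (c := M) hGm2 hf0m (Eventually.of_forall fun x => ?_)
    rw [hf0_def]
    simp only [norm_mul, Complex.norm_real, Real.norm_eq_abs, norm_norm]
    rw [abs_of_nonneg (norm_nonneg (fderiv ℝ a x))]
    calc |g x| * ‖u x‖ ≤ ‖fderiv ℝ a x‖ * M := by
          refine mul_le_mul ?_ (hM _) (norm_nonneg _) (norm_nonneg _)
          rw [hg_def]
          simpa [he] using (fderiv ℝ a x).le_opNorm e
      _ = M * ‖fderiv ℝ a x‖ := mul_comm _ _
  -- key sequential lemma
  have key : ∀ η : ℕ → ℝ, (∀ n, η n ≠ 0) → (∀ n, |η n| ≤ 1) → Tendsto η atTop (𝓝 0) →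
      Tendsto (fun n => eLpNorm (fun x => F (η n) x - f0 x) 2 volume) atTop (𝓝 0) := by
    intro η hη0 hη1 hηlim
    have heq : ∀ n, eLpNorm (fun x => F (η n) x - f0 x) 2 volume
        = eLpNorm (F (η n) - f0) 2 μ1 := fun n => hnorm_eq (η n) (hη1 n)
    simp only [heq]
    refine tendsto_Lp_finite_of_tendsto_ae one_le_two ENNReal.ofNat_ne_top
      (fun n => ((hFc (η n)).aestronglyMeasurable)) hf0L2 ?_ ?_
    · -- uniform integrability
      have hd2' : (2 : ℝ≥0∞) < (d : ℝ≥0∞) := by exact_mod_cast (by omega : (2:ℕ) < d)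
      have hGK2 : MemLp (fun y => ‖fderiv ℝ a y‖) (d : ℝ≥0∞) (volume.restrict K2) :=
        haW K2 hK2c
      refine unifIntegrable_of_le_eLpNorm one_le_two hd2' (ENNReal.natCast_ne_top d)
        (fun n => (hFc (η n)).aestronglyMeasurable)
        (C := ENNReal.ofReal M * eLpNorm (fun y => ‖fderiv ℝ a y‖) (d : ℝ≥0∞)
          (volume.restrict K2))
        (ENNReal.mul_ne_top ENNReal.ofReal_ne_top hGK2.2.ne) (fun n => ?_)
      have hb1 : eLpNorm (F (η n)) (d : ℝ≥0∞) μ1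
          ≤ eLpNorm (fun x => M * ((a (x + η n • e) - a x) / η n)) (d : ℝ≥0∞) μ1 := by
        refine eLpNorm_mono fun x => ?_
        rw [hF_def]
        simp only [norm_mul, Complex.norm_real, Real.norm_eq_abs, abs_mul, abs_of_nonneg hM0]
        calc |(a (x + η n • e) - a x) / η n| * ‖u (x + η n • e)‖
            ≤ |(a (x + η n • e) - a x) / η n| * M :=
              mul_le_mul_of_nonneg_left (hM _) (abs_nonneg _)
          _ = M * |(a (x + η n • e) - a x) / η n| := mul_comm _ _
      have hb2 : eLpNorm (fun x => M * ((a (x + η n • e) - a x) / η n)) (d : ℝ≥0∞) μ1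
          = (‖M‖₊ : ℝ≥0∞) * eLpNorm (fun x => (a (x + η n • e) - a x) / η n) (d : ℝ≥0∞) μ1 := by
        have : (fun x : EuclideanSpace ℝ (Fin d) => M * ((a (x + η n • e) - a x) / η n))
            = M • (fun x => (a (x + η n • e) - a x) / η n) := rfl
        rw [this, eLpNorm_const_smul]
        rfl
      refine (hb1.trans_eq hb2).trans ?_
      rw [show ((‖M‖₊ : ℝ≥0∞)) = ENNReal.ofReal M from Real.enorm_eq_ofReal hM0]
      gcongr
      exact core_bound hd a ha e he hK1m hsub12 hK2c.measure_lt_top.ne hGK2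
        (hη0 n) (hη1 n)
    · -- pointwise a.e. convergence
      refine Eventually.of_forall fun x => ?_
      have hquot : Tendsto (fun n => (a (x + η n • e) - a x) / η n) atTop (𝓝 (g x)) := by
        have hD : HasDerivAt (fun t : ℝ => a (x + t • e)) (g x) 0 := by
          have h1 : HasDerivAt (fun s : ℝ => x + s • e) e 0 := by
            simpa using ((hasDerivAt_id (0:ℝ)).smul_const e).const_add x
          have h2 := (ha (x + (0:ℝ) • e)).hasFDerivAt.comp_hasDerivAt 0 h1
          simpa [hg_def, Function.comp_def] using h2
        have hslope := hasDerivAt_iff_tendsto_slope.1 hD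
        have hηne : Tendsto η atTop (𝓝[≠] (0:ℝ)) :=
          tendsto_nhdsWithin_of_tendsto_nhds_of_eventually_within η hηlim
            (Eventually.of_forall fun n => hη0 n)
        refine (hslope.comp hηne).congr fun n => ?_
        simp [slope_def_field]
      have hu' : Tendsto (fun n => u (x + η n • e)) atTop (𝓝 (u x)) := by
        have h1 : Tendsto (fun n => x + η n • e) atTop (𝓝 (x + (0:ℝ) • e)) :=
          tendsto_const_nhds.add (hηlim.smul_const e)
        rw [zero_smul, add_zero] at h1
        exact (hu.continuous.tendsto x).comp h1
      have := ((Complex.continuous_ofReal.tendsto (g x)).comp hquot).mul hu'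
      simpa [hF_def, hf0_def] using this
  -- reduce the filter statement to sequences
  rw [tendsto_iff_seq_tendsto]
  intro δs hδs
  have hδ0ev : ∀ᶠ n in atTop, δs n ≠ 0 := by
    have h1 : ∀ᶠ n in atTop, δs n ∈ ({0}ᶜ : Set ℝ) := hδs self_mem_nhdsWithin
    exact h1.mono fun n hn => hn
  have hδ1ev : ∀ᶠ n in atTop, |δs n| ≤ 1 := by
    have h2 : Tendsto δs atTop (𝓝 (0:ℝ)) := hδs.mono_right nhdsWithin_le_nhds
    have h3 : ∀ᶠ n in atTop, δs n ∈ Metric.closedBall (0:ℝ) 1 :=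
      h2 (Metric.closedBall_mem_nhds (0:ℝ) one_pos)
    refine h3.mono fun n hn => ?_
    simpa [Real.dist_eq] using hn
  set η : ℕ → ℝ := fun n => if δs n ≠ 0 ∧ |δs n| ≤ 1 then δs n else 1 with hη_def
  have hη0 : ∀ n, η n ≠ 0 := by
    intro n
    rw [hη_def]
    by_cases h : δs n ≠ 0 ∧ |δs n| ≤ 1
    · simpa [h] using h.1
    · simp [h]
  have hη1 : ∀ n, |η n| ≤ 1 := by
    intro n
    rw [hη_def]
    by_cases h : δs n ≠ 0 ∧ |δs n| ≤ 1
    · simpa [h] using h.2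
    · simp [h]
  have hηeq : ∀ᶠ n in atTop, η n = δs n := by
    filter_upwards [hδ0ev, hδ1ev] with n h1 h2
    rw [hη_def]
    simp [h1, h2]
  have hηeq' : η =ᶠ[atTop] δs := hηeq
  have hηlim : Tendsto η atTop (𝓝 (0:ℝ)) :=
    (hδs.mono_right nhdsWithin_le_nhds).congr' hηeq'.symm
  have hres := key η hη0 hη1 hηlim
  refine hres.congr' ?_
  filter_upwards [hηeq] with n hn
  rw [hn]
  rfl
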